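/- arXiv:1402.4448 — 2 statements merged into one kernel-verified Lean document; each statement's English description precedes it below -/
import Mathlib

section
/- Fix u, v, w ∈ ℕ and weights α, β ∈ ℚ, and set L = u+v+w. Let A, B, C ∈ ℚ[[t]] be the formal power series whose coefficients of t^n are the total weights of n-step walks in the triangle model starting at (u,v,w) whose endpoint has first, second, respectively third, coordinate equal to 0. Then (α+β)·t·(A+B+C)·(1−p^(L+3)) = p^(u+1) + p^(v+1) + p^(w+1) − p^(v+w+2) − p^(u+w+2) − p^(u+v+2) in ℚ[[t]]. -/
open scoped Classical

/-- The directed sublattice step-set Ω′. -/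
def OmegaA : Finset (ℤ × ℤ × ℤ) := {(1,0,-1), (-1,1,0), (0,-1,1)}

/-- The directed sublattice step-set Ω″. -/
def OmegaB : Finset (ℤ × ℤ × ℤ) := {(1,-1,0), (-1,0,1), (0,1,-1)}

/-- The full step-set Ω₂ = Ω′ ∪ Ω″ of the triangle model. -/
def OmegaFull : Finset (ℤ × ℤ × ℤ) := OmegaA ∪ OmegaB

/-- Position after `i` steps of the walk with step sequence `s` starting at `start`. -/
def triPos (start : ℤ × ℤ × ℤ) {n : ℕ} (s : Fin n → ℤ × ℤ × ℤ) (i : ℕ) : ℤ × ℤ × ℤ :=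
  start + ∑ j ∈ Finset.univ.filter (fun j : Fin n => (j : ℕ) < i), s j

/-- All three coordinates nonnegative. -/
def nonneg3 (v : ℤ × ℤ × ℤ) : Prop := 0 ≤ v.1 ∧ 0 ≤ v.2.1 ∧ 0 ≤ v.2.2

/-- `n`-step walks of the triangle model starting at `start`, encoded by their step
sequences: every step lies in Ω₂ and every intermediate point lies in ℕ³. -/
noncomputable def triWalks (start : ℤ × ℤ × ℤ) (n : ℕ) : Finset (Fin n → ℤ × ℤ × ℤ) :=
  (Fintype.piFinset fun _ : Fin n => OmegaFull).filter
    (fun s => ∀ i ≤ n, nonneg3 (triPos start s i))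

/-- Number of steps of the walk lying in Ω′. -/
noncomputable def countA {n : ℕ} (s : Fin n → ℤ × ℤ × ℤ) : ℕ :=
  (Finset.univ.filter fun j => s j ∈ OmegaA).card

/-- Number of steps of the walk lying in Ω″. -/
noncomputable def countB {n : ℕ} (s : Fin n → ℤ × ℤ × ℤ) : ℕ :=
  (Finset.univ.filter fun j => s j ∈ OmegaB).card

-- auxiliary defs
noncomputable def stepWt (α β : ℚ) (v : ℤ × ℤ × ℤ) : ℚ := if v ∈ OmegaA then α else β

noncomputable def wt (α β : ℚ) {n : ℕ} (s : Fin n → ℤ × ℤ × ℤ) : ℚ :=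
  α ^ countA s * β ^ countB s

noncomputable def FF (α β : ℚ) (x₀ x : ℤ × ℤ × ℤ) : PowerSeries ℚ :=
  PowerSeries.mk fun n =>
    ∑ s ∈ (triWalks x₀ n).filter (fun s => triPos x₀ s n = x), wt α β s

noncomputable def Tri (L : ℕ) : Finset (ℤ × ℤ × ℤ) :=
  (Finset.Icc (0:ℤ) L ×ˢ Finset.Icc (0:ℤ) L ×ˢ Finset.Icc (0:ℤ) L).filter
    (fun x => x.1 + x.2.1 + x.2.2 = L)

noncomputable def psi (p : PowerSeries ℚ) (x : ℤ × ℤ × ℤ) : PowerSeries ℚ :=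
  p ^ (x.1 + 1).toNat + p ^ (x.2.1 + 1).toNat + p ^ (x.2.2 + 1).toNat
    - p ^ (x.2.1 + x.2.2 + 2).toNat - p ^ (x.1 + x.2.2 + 2).toNat
    - p ^ (x.1 + x.2.1 + 2).toNat

lemma mem_OmegaFull {s : ℤ × ℤ × ℤ} : s ∈ OmegaFull ↔
    s = (1,0,-1) ∨ s = (-1,1,0) ∨ s = (0,-1,1) ∨ s = (1,-1,0) ∨ s = (-1,0,1) ∨ s = (0,1,-1) := by
  simp [OmegaFull, OmegaA, OmegaB]
  tauto

lemma step_sum_zero {s : ℤ × ℤ × ℤ} (h : s ∈ OmegaFull) : s.1 + s.2.1 + s.2.2 = 0 := by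
  rcases mem_OmegaFull.1 h with h|h|h|h|h|h <;> subst h <;> norm_num

lemma mem_Tri {L : ℕ} {x : ℤ × ℤ × ℤ} :
    x ∈ Tri L ↔ nonneg3 x ∧ x.1 + x.2.1 + x.2.2 = L := by
  simp only [Tri, Finset.mem_filter, Finset.mem_product, Finset.mem_Icc, nonneg3]
  constructor
  · rintro ⟨⟨⟨h1,_⟩,⟨h2,_⟩,⟨h3,_⟩⟩, hs⟩; exact ⟨⟨h1,h2,h3⟩, hs⟩
  · rintro ⟨⟨h1,h2,h3⟩, hs⟩; refine ⟨⟨⟨h1,?_⟩,⟨h2,?_⟩,⟨h3,?_⟩⟩, hs⟩ <;> omega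

lemma triPos_zero (st : ℤ × ℤ × ℤ) {n : ℕ} (s : Fin n → ℤ × ℤ × ℤ) : triPos st s 0 = st := by
  simp [triPos]

lemma triPos_eq (st : ℤ × ℤ × ℤ) {n : ℕ} (s : Fin (n+1) → ℤ × ℤ × ℤ) (i : ℕ) :
    triPos st s i
      = st + (∑ j : Fin n, if (j : ℕ) < i then s j.castSucc else 0)
          + (if n < i then s (Fin.last n) else 0) := by
  rw [triPos, Finset.sum_filter, Fin.sum_univ_castSucc]
  simp only [Fin.coe_castSucc, Fin.val_last]
  ring

lemma triPos_init (st : ℤ × ℤ × ℤ) {n : ℕ} (s : Fin (n+1) → ℤ × ℤ × ℤ) {i : ℕ} (hi : i ≤ n) :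
    triPos st (Fin.init s) i = triPos st s i := by
  rw [triPos_eq st s i, if_neg (by omega), triPos, Finset.sum_filter]
  simp [Fin.init]

lemma triPos_last (st : ℤ × ℤ × ℤ) {n : ℕ} (s : Fin (n+1) → ℤ × ℤ × ℤ) :
    triPos st s (n+1) = triPos st (Fin.init s) n + s (Fin.last n) := by
  rw [triPos_eq st s (n+1), if_pos (by omega), triPos, Finset.sum_filter]
  have : ∀ j : Fin n, ((if (j:ℕ) < n+1 then s j.castSucc else 0) : ℤ×ℤ×ℤ)
      = if (j:ℕ) < n then Fin.init s j else 0 := by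
    intro j; rw [if_pos (by omega), if_pos j.isLt]; rfl
  rw [Finset.sum_congr rfl (fun j _ => this j)]

lemma mem_triWalks {st : ℤ × ℤ × ℤ} {n : ℕ} {s : Fin n → ℤ × ℤ × ℤ} :
    s ∈ triWalks st n ↔ (∀ j, s j ∈ OmegaFull) ∧ ∀ i ≤ n, nonneg3 (triPos st s i) := by
  simp [triWalks, Fintype.mem_piFinset]

lemma OmegaA_disj_B {v : ℤ × ℤ × ℤ} (h : v ∈ OmegaA) : v ∉ OmegaB := by
  fin_cases h <;> decide

lemma countA_snoc {n : ℕ} (s : Fin n → ℤ × ℤ × ℤ) (v : ℤ × ℤ × ℤ) :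
    countA (Fin.snoc s v) = countA s + (if v ∈ OmegaA then 1 else 0) := by
  unfold countA
  rw [Finset.card_filter, Finset.card_filter, Fin.sum_univ_castSucc]
  simp [Fin.snoc_castSucc, Fin.snoc_last]

lemma countB_snoc {n : ℕ} (s : Fin n → ℤ × ℤ × ℤ) (v : ℤ × ℤ × ℤ) :
    countB (Fin.snoc s v) = countB s + (if v ∈ OmegaB then 1 else 0) := by
  unfold countB
  rw [Finset.card_filter, Finset.card_filter, Fin.sum_univ_castSucc]
  simp [Fin.snoc_castSucc, Fin.snoc_last]

lemma wt_snoc (α β : ℚ) {n : ℕ} (s : Fin n → ℤ × ℤ × ℤ) {v : ℤ × ℤ × ℤ} (hv : v ∈ OmegaFull) :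
    wt α β (Fin.snoc s v) = stepWt α β v * wt α β s := by
  unfold wt stepWt
  rw [countA_snoc, countB_snoc]
  by_cases hA : v ∈ OmegaA
  · rw [if_pos hA, if_pos hA, if_neg (OmegaA_disj_B hA)]
    rw [pow_add, pow_add]; ring
  · have hB : v ∈ OmegaB := by
      rcases Finset.mem_union.1 hv with h|h; exact absurd h hA; exact h
    rw [if_neg hA, if_neg hA, if_pos hB, pow_add, pow_add]; ring

lemma coeff_FF_zero (α β : ℚ) (x₀ x : ℤ×ℤ×ℤ) (h0 : nonneg3 x₀) :
    PowerSeries.coeff 0 (FF α β x₀ x) = if x₀ = x then 1 else 0 := by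
  rw [FF, PowerSeries.coeff_mk]
  have huniv : (Finset.univ : Finset (Fin 0 → ℤ×ℤ×ℤ)) = {fun j => j.elim0} := by
    apply Finset.eq_of_subset_of_card_le
    · intro s _; simp only [Finset.mem_singleton]; funext j; exact j.elim0
    · simp
  have hW : triWalks x₀ 0 = {fun j => j.elim0} := by
    rw [← huniv]
    apply Finset.eq_univ_iff_forall.2
    intro s
    rw [mem_triWalks]
    refine ⟨fun j => j.elim0, fun i hi => ?_⟩
    interval_cases i
    rw [triPos_zero]; exact h0
  rw [hW]
  have hwt : wt α β (fun j : Fin 0 => j.elim0) = 1 := by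
    simp [wt, countA, countB]
  by_cases hx : x₀ = x
  · rw [if_pos hx, Finset.filter_singleton, if_pos (by rw [triPos_zero]; exact hx),
      Finset.sum_singleton, hwt]
  · rw [if_neg hx, Finset.filter_singleton, if_neg (by rw [triPos_zero]; exact hx),
      Finset.sum_empty]

lemma coeff_FF_succ (α β : ℚ) (x₀ x : ℤ×ℤ×ℤ) (hx : nonneg3 x) (n : ℕ) :
    PowerSeries.coeff (n+1) (FF α β x₀ x)
      = ∑ v ∈ OmegaFull, stepWt α β v * PowerSeries.coeff n (FF α β x₀ (x - v)) := by
  simp only [FF, PowerSeries.coeff_mk]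
  rw [← Finset.sum_fiberwise_of_maps_to
    (g := fun s : Fin (n+1) → ℤ×ℤ×ℤ => s (Fin.last n))
    (fun s hs => ((mem_triWalks.1 (Finset.mem_filter.1 hs).1).1 (Fin.last n)))]
  refine Finset.sum_congr rfl fun v hv => ?_
  rw [Finset.mul_sum]
  refine Finset.sum_nbij' (fun s => Fin.init s) (fun s => Fin.snoc s v) ?_ ?_ ?_ ?_ ?_
  · intro s hs
    simp only [Finset.mem_filter] at hs ⊢
    obtain ⟨⟨hs1, hs2⟩, hlast⟩ := hs
    obtain ⟨hsteps, hpos⟩ := mem_triWalks.1 hs1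
    refine ⟨mem_triWalks.2 ⟨fun j => ?_, fun i hi => ?_⟩, ?_⟩
    · rw [Fin.init]; exact hsteps _
    · rw [triPos_init _ _ hi]; exact hpos i (by omega)
    · have := triPos_last x₀ s
      rw [hs2, hlast] at this
      rw [this]; abel
  · intro s hs
    simp only [Finset.mem_filter] at hs ⊢
    obtain ⟨hs1, hs2⟩ := hs
    obtain ⟨hsteps, hpos⟩ := mem_triWalks.1 hs1
    have hend : triPos x₀ (Fin.snoc s v : Fin (n+1) → ℤ×ℤ×ℤ) (n+1) = x := by
      have h1 : Fin.init (Fin.snoc s v : Fin (n+1) → ℤ×ℤ×ℤ) = s := by simp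
      have := triPos_last x₀ (Fin.snoc s v : Fin (n+1) → ℤ×ℤ×ℤ)
      rw [h1, Fin.snoc_last, hs2] at this
      rw [this]; abel
    refine ⟨⟨mem_triWalks.2 ⟨fun j => ?_, fun i hi => ?_⟩, hend⟩, by simp⟩
    · show (Fin.snoc s v : Fin (n+1) → ℤ×ℤ×ℤ) j ∈ OmegaFull
      refine Fin.lastCases (motive := fun j => (Fin.snoc s v : Fin (n+1) → ℤ×ℤ×ℤ) j ∈ OmegaFull) ?_ ?_ j
      · simpa using hv
      · intro i; simpa using hsteps i
    · rcases Nat.lt_or_ge i (n+1) with h | h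
      · rw [← triPos_init x₀ _ (by omega : i ≤ n), Fin.init_snoc]
        exact hpos i (by omega)
      · have : i = n + 1 := by omega
        rw [this, hend]; exact hx
  · intro s hs
    simp only [Finset.mem_filter] at hs
    show Fin.snoc (Fin.init s) v = s
    rw [← hs.2]; exact Fin.snoc_init_self s
  · intro s _; show Fin.init (Fin.snoc s v : Fin (n+1) → ℤ×ℤ×ℤ) = s; simp
  · intro s hs
    simp only [Finset.mem_filter] at hs
    have hsnoc : s = Fin.snoc (Fin.init s) v := by
      rw [← hs.2]; exact (Fin.snoc_init_self s).symm
    conv_lhs => rw [hsnoc]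
    exact wt_snoc α β _ hv

lemma triPos_sum (st : ℤ × ℤ × ℤ) {n : ℕ} (s : Fin n → ℤ × ℤ × ℤ)
    (hs : ∀ j, s j ∈ OmegaFull) (i : ℕ) :
    (triPos st s i).1 + (triPos st s i).2.1 + (triPos st s i).2.2
      = st.1 + st.2.1 + st.2.2 := by
  rw [triPos]
  simp only [Prod.fst_add, Prod.snd_add, Prod.fst_sum, Prod.snd_sum]
  have : ∀ F : Finset (Fin n),
      (∑ j ∈ F, (s j).1) + (∑ j ∈ F, (s j).2.1) + (∑ j ∈ F, (s j).2.2) = 0 := by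
    intro F
    rw [← Finset.sum_add_distrib, ← Finset.sum_add_distrib]
    exact Finset.sum_eq_zero fun j _ => step_sum_zero (hs j)
  have h2 := this (Finset.univ.filter (fun j : Fin n => (j : ℕ) < i))
  ring_nf
  ring_nf at h2
  omega

lemma FF_eq_zero (α β : ℚ) (x₀ x : ℤ×ℤ×ℤ)
    (h : ¬ (nonneg3 x ∧ x.1 + x.2.1 + x.2.2 = x₀.1 + x₀.2.1 + x₀.2.2)) :
    FF α β x₀ x = 0 := by
  ext n
  rw [FF, PowerSeries.coeff_mk, map_zero]
  refine Finset.sum_eq_zero fun s hs => ?_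
  simp only [Finset.mem_filter] at hs
  obtain ⟨hs1, hs2⟩ := hs
  obtain ⟨hsteps, hpos⟩ := mem_triWalks.1 hs1
  exact absurd ⟨hs2 ▸ hpos n le_rfl, hs2 ▸ triPos_sum x₀ s hsteps n⟩ h

lemma FF_rec (α β : ℚ) (x₀ x : ℤ×ℤ×ℤ) (h0 : nonneg3 x₀) (hx : nonneg3 x) :
    FF α β x₀ x = (if x₀ = x then 1 else 0)
      + PowerSeries.X * ∑ v ∈ OmegaFull, PowerSeries.C (stepWt α β v) * FF α β x₀ (x - v) := by
  ext n
  rcases n with _ | n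
  · rw [coeff_FF_zero α β x₀ x h0, map_add]
    have h1 : (PowerSeries.coeff 0) (PowerSeries.X * ∑ v ∈ OmegaFull,
        PowerSeries.C (stepWt α β v) * FF α β x₀ (x - v)) = 0 := by
      rw [PowerSeries.coeff_zero_eq_constantCoeff, map_mul, PowerSeries.constantCoeff_X,
        zero_mul]
    rw [h1, add_zero]
    by_cases hc : x₀ = x
    · rw [if_pos hc, if_pos hc, PowerSeries.coeff_zero_eq_constantCoeff, map_one]
    · rw [if_neg hc, if_neg hc, map_zero]
  · have h1 : (PowerSeries.coeff (n+1)) (if x₀ = x then (1 : PowerSeries ℚ) else 0) = 0 := by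
      by_cases hc : x₀ = x
      · rw [if_pos hc, PowerSeries.coeff_one, if_neg (by omega)]
      · rw [if_neg hc, map_zero]
    rw [map_add, h1, zero_add, PowerSeries.coeff_succ_X_mul, map_sum]
    rw [coeff_FF_succ α β x₀ x hx n]
    exact Finset.sum_congr rfl fun v _ => by rw [PowerSeries.coeff_C_mul]

lemma sum_OmegaFull {M : Type*} [AddCommMonoid M] (f : ℤ×ℤ×ℤ → M) :
    ∑ v ∈ OmegaFull, f v
      = f (1,0,-1) + f (-1,1,0) + f (0,-1,1) + f (1,-1,0) + f (-1,0,1) + f (0,1,-1) := by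
  have h : OmegaFull = {(1,0,-1), (-1,1,0), (0,-1,1), (1,-1,0), (-1,0,1), (0,1,-1)} := by
    decide
  rw [h]
  rw [Finset.sum_insert (by decide), Finset.sum_insert (by decide),
    Finset.sum_insert (by decide), Finset.sum_insert (by decide),
    Finset.sum_insert (by decide), Finset.sum_singleton]
  abel

lemma stepWt_A1 (α β : ℚ) : stepWt α β (1,0,-1) = α := by rw [stepWt, if_pos (by decide)]
lemma stepWt_A2 (α β : ℚ) : stepWt α β (-1,1,0) = α := by rw [stepWt, if_pos (by decide)]
lemma stepWt_A3 (α β : ℚ) : stepWt α β (0,-1,1) = α := by rw [stepWt, if_pos (by decide)]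
lemma stepWt_B1 (α β : ℚ) : stepWt α β (1,-1,0) = β := by rw [stepWt, if_neg (by decide)]
lemma stepWt_B2 (α β : ℚ) : stepWt α β (-1,0,1) = β := by rw [stepWt, if_neg (by decide)]
lemma stepWt_B3 (α β : ℚ) : stepWt α β (0,1,-1) = β := by rw [stepWt, if_neg (by decide)]

lemma psi_eval (p : PowerSeries ℚ) (x : ℤ×ℤ×ℤ) (e1 e2 e3 e4 e5 e6 : ℕ)
    (h1 : x.1 + 1 = (e1 : ℤ)) (h2 : x.2.1 + 1 = (e2 : ℤ)) (h3 : x.2.2 + 1 = (e3 : ℤ))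
    (h4 : x.2.1 + x.2.2 + 2 = (e4 : ℤ)) (h5 : x.1 + x.2.2 + 2 = (e5 : ℤ))
    (h6 : x.1 + x.2.1 + 2 = (e6 : ℤ)) :
    psi p x = p ^ e1 + p ^ e2 + p ^ e3 - p ^ e4 - p ^ e5 - p ^ e6 := by
  rw [psi]
  rw [show (x.1+1).toNat = e1 by omega, show (x.2.1+1).toNat = e2 by omega,
    show (x.2.2+1).toNat = e3 by omega, show (x.2.1+x.2.2+2).toNat = e4 by omega,
    show (x.1+x.2.2+2).toNat = e5 by omega, show (x.1+x.2.1+2).toNat = e6 by omega]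

section eigen

variable {α β : ℚ} {p : PowerSeries ℚ}

lemma eig (hp' : p = (PowerSeries.C α + PowerSeries.C β) * PowerSeries.X * (1 + p + p ^ 2))
    (m : ℕ) :
    PowerSeries.X * ((PowerSeries.C α + PowerSeries.C β)
      * (p ^ m + p ^ (m+1) + p ^ (m+2))) = p ^ (m+1) := by
  linear_combination (-(p ^ m)) * hp'

lemma eigen (hp' : p = (PowerSeries.C α + PowerSeries.C β) * PowerSeries.X * (1 + p + p ^ 2))
    (y : ℤ×ℤ×ℤ) (hy : nonneg3 y) :
    PowerSeries.X * ∑ v ∈ OmegaFull, PowerSeries.C (stepWt α β v) * psi p (y + v)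
      = psi p y := by
  obtain ⟨a, ha⟩ := Int.eq_ofNat_of_zero_le hy.1
  obtain ⟨b, hb⟩ := Int.eq_ofNat_of_zero_le hy.2.1
  obtain ⟨c, hc⟩ := Int.eq_ofNat_of_zero_le hy.2.2
  obtain ⟨y1, y2, y3⟩ := y
  simp only at ha hb hc
  subst ha hb hc
  rw [sum_OmegaFull (fun v => PowerSeries.C (stepWt α β v) * psi p (((a:ℤ),(b:ℤ),(c:ℤ)) + v))]
  rw [stepWt_A1, stepWt_A2, stepWt_A3, stepWt_B1, stepWt_B2, stepWt_B3]
  rw [psi_eval p _ (a+2) (b+1) c (b+c+1) (a+c+2) (a+b+3)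
      (by simp only [Prod.fst_add, Prod.snd_add]; push_cast; ring) (by simp only [Prod.fst_add, Prod.snd_add]; push_cast; ring) (by simp only [Prod.fst_add, Prod.snd_add]; push_cast; ring)
      (by simp only [Prod.fst_add, Prod.snd_add]; push_cast; ring) (by simp only [Prod.fst_add, Prod.snd_add]; push_cast; ring) (by simp only [Prod.fst_add, Prod.snd_add]; push_cast; ring),
    psi_eval p _ a (b+2) (c+1) (b+c+3) (a+c+1) (a+b+2)
      (by simp only [Prod.fst_add, Prod.snd_add]; push_cast; ring) (by simp only [Prod.fst_add, Prod.snd_add]; push_cast; ring) (by simp only [Prod.fst_add, Prod.snd_add]; push_cast; ring)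
      (by simp only [Prod.fst_add, Prod.snd_add]; push_cast; ring) (by simp only [Prod.fst_add, Prod.snd_add]; push_cast; ring) (by simp only [Prod.fst_add, Prod.snd_add]; push_cast; ring),
    psi_eval p _ (a+1) b (c+2) (b+c+2) (a+c+3) (a+b+1)
      (by simp only [Prod.fst_add, Prod.snd_add]; push_cast; ring) (by simp only [Prod.fst_add, Prod.snd_add]; push_cast; ring) (by simp only [Prod.fst_add, Prod.snd_add]; push_cast; ring)
      (by simp only [Prod.fst_add, Prod.snd_add]; push_cast; ring) (by simp only [Prod.fst_add, Prod.snd_add]; push_cast; ring) (by simp only [Prod.fst_add, Prod.snd_add]; push_cast; ring),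
    psi_eval p _ (a+2) b (c+1) (b+c+1) (a+c+3) (a+b+2)
      (by simp only [Prod.fst_add, Prod.snd_add]; push_cast; ring) (by simp only [Prod.fst_add, Prod.snd_add]; push_cast; ring) (by simp only [Prod.fst_add, Prod.snd_add]; push_cast; ring)
      (by simp only [Prod.fst_add, Prod.snd_add]; push_cast; ring) (by simp only [Prod.fst_add, Prod.snd_add]; push_cast; ring) (by simp only [Prod.fst_add, Prod.snd_add]; push_cast; ring),
    psi_eval p _ a (b+1) (c+2) (b+c+3) (a+c+2) (a+b+1)
      (by simp only [Prod.fst_add, Prod.snd_add]; push_cast; ring) (by simp only [Prod.fst_add, Prod.snd_add]; push_cast; ring) (by simp only [Prod.fst_add, Prod.snd_add]; push_cast; ring)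
      (by simp only [Prod.fst_add, Prod.snd_add]; push_cast; ring) (by simp only [Prod.fst_add, Prod.snd_add]; push_cast; ring) (by simp only [Prod.fst_add, Prod.snd_add]; push_cast; ring),
    psi_eval p _ (a+1) (b+2) c (b+c+2) (a+c+1) (a+b+3)
      (by simp only [Prod.fst_add, Prod.snd_add]; push_cast; ring) (by simp only [Prod.fst_add, Prod.snd_add]; push_cast; ring) (by simp only [Prod.fst_add, Prod.snd_add]; push_cast; ring)
      (by simp only [Prod.fst_add, Prod.snd_add]; push_cast; ring) (by simp only [Prod.fst_add, Prod.snd_add]; push_cast; ring) (by simp only [Prod.fst_add, Prod.snd_add]; push_cast; ring),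
    psi_eval p _ (a+1) (b+1) (c+1) (b+c+2) (a+c+2) (a+b+2)
      (by simp only [Prod.fst_add, Prod.snd_add]; push_cast; ring) (by simp only [Prod.fst_add, Prod.snd_add]; push_cast; ring) (by simp only [Prod.fst_add, Prod.snd_add]; push_cast; ring)
      (by simp only [Prod.fst_add, Prod.snd_add]; push_cast; ring) (by simp only [Prod.fst_add, Prod.snd_add]; push_cast; ring) (by simp only [Prod.fst_add, Prod.snd_add]; push_cast; ring)]
  linear_combination (eig hp' a) + (eig hp' b) + (eig hp' c)
    - (eig hp' (b+c+1)) - (eig hp' (a+c+1)) - (eig hp' (a+b+1))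

end eigen

section bdry

variable (p : PowerSeries ℚ) (L : ℕ)

lemma bdry1 {B C : ℤ} (hB : 0 ≤ B) (hC : 0 ≤ C) (hs : B + C = (L:ℤ) + 1) :
    psi p (-1, B, C) = 1 - p ^ (L + 3) := by
  obtain ⟨b, hb⟩ := Int.eq_ofNat_of_zero_le hB
  obtain ⟨c, hc⟩ := Int.eq_ofNat_of_zero_le hC
  subst hb hc
  rw [psi_eval p _ 0 (b+1) (c+1) (L+3) (c+1) (b+1) (by norm_num) (by push_cast; ring)
    (by push_cast; ring) (by push_cast; omega) (by push_cast; omega) (by push_cast; omega)]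
  ring

lemma bdry2 {A C : ℤ} (hA : 0 ≤ A) (hC : 0 ≤ C) (hs : A + C = (L:ℤ) + 1) :
    psi p (A, -1, C) = 1 - p ^ (L + 3) := by
  obtain ⟨a, ha⟩ := Int.eq_ofNat_of_zero_le hA
  obtain ⟨c, hc⟩ := Int.eq_ofNat_of_zero_le hC
  subst ha hc
  rw [psi_eval p _ (a+1) 0 (c+1) (c+1) (L+3) (a+1) (by push_cast; ring) (by norm_num)
    (by push_cast; ring) (by push_cast; omega) (by push_cast; omega) (by push_cast; omega)]
  ring

lemma bdry3 {A B : ℤ} (hA : 0 ≤ A) (hB : 0 ≤ B) (hs : A + B = (L:ℤ) + 1) :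
    psi p (A, B, -1) = 1 - p ^ (L + 3) := by
  obtain ⟨a, ha⟩ := Int.eq_ofNat_of_zero_le hA
  obtain ⟨b, hb⟩ := Int.eq_ofNat_of_zero_le hB
  subst ha hb
  rw [psi_eval p _ (a+1) (b+1) 0 (b+1) (a+1) (L+3) (by push_cast; ring) (by push_cast; ring)
    (by norm_num) (by push_cast; omega) (by push_cast; omega) (by push_cast; omega)]
  ring

end bdry

lemma boundary_sum (α β : ℚ) (x₀ : ℤ×ℤ×ℤ) (L : ℕ)
    (hsum : x₀.1 + x₀.2.1 + x₀.2.2 = (L:ℤ)) (g : ℤ×ℤ×ℤ → ℤ) :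
    (PowerSeries.mk fun n =>
        ∑ s ∈ (triWalks x₀ n).filter (fun s => g (triPos x₀ s n) = 0),
          α ^ countA s * β ^ countB s)
      = ∑ y ∈ (Tri L).filter (fun y => g y = 0), FF α β x₀ y := by
  ext n
  rw [PowerSeries.coeff_mk, map_sum]
  simp only [FF, PowerSeries.coeff_mk]
  rw [← Finset.sum_fiberwise_of_maps_to (g := fun s : Fin n → ℤ×ℤ×ℤ => triPos x₀ s n)
    (fun s hs => ?_)]
  · refine Finset.sum_congr rfl fun y hy => ?_
    rw [Finset.filter_filter]
    refine Finset.sum_congr (Finset.filter_congr fun s hs => ?_) fun _ _ => rfl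
    simp only [Finset.mem_filter] at hy
    constructor
    · rintro ⟨_, h⟩; exact h
    · intro h; exact ⟨h ▸ hy.2, h⟩
  · simp only [Finset.mem_filter] at hs ⊢
    obtain ⟨hs1, hs2⟩ := hs
    obtain ⟨hsteps, hpos⟩ := mem_triWalks.1 hs1
    exact ⟨mem_Tri.2 ⟨hpos n le_rfl, by rw [triPos_sum x₀ s hsteps n, hsum]⟩, hs2⟩

lemma ite_flip {M : Type*} [Zero M] {P Q : Prop} [Decidable P] [Decidable Q] {t : M}
    (h : P ↔ ¬ Q) : (if P then (0:M) else t) = if Q then t else 0 := by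
  by_cases hq : Q
  · rw [if_pos hq, if_neg (fun hP => (h.1 hP) hq)]
  · rw [if_pos (h.2 hq), if_neg hq]

lemma ite_then_congr {M : Type*} [Zero M] {Q : Prop} [Decidable Q] {t t' : M}
    (h : Q → t = t') : (if Q then t else 0) = if Q then t' else 0 := by
  by_cases hq : Q
  · rw [if_pos hq, if_pos hq, h hq]
  · rw [if_neg hq, if_neg hq]

lemma escape (α β : ℚ) (p : PowerSeries ℚ) (L : ℕ) (y : ℤ×ℤ×ℤ) (hy : y ∈ Tri L) :
    ∑ v ∈ OmegaFull, (if nonneg3 (y+v) then 0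
        else PowerSeries.C (stepWt α β v) * psi p (y+v))
      = (if y.1 = 0 then (PowerSeries.C α + PowerSeries.C β) * (1 - p^(L+3)) else 0)
        + (if y.2.1 = 0 then (PowerSeries.C α + PowerSeries.C β) * (1 - p^(L+3)) else 0)
        + (if y.2.2 = 0 then (PowerSeries.C α + PowerSeries.C β) * (1 - p^(L+3)) else 0) := by
  obtain ⟨⟨h1, h2, h3⟩, hsum⟩ := mem_Tri.1 hy
  rw [sum_OmegaFull (fun v => if nonneg3 (y+v) then 0
    else PowerSeries.C (stepWt α β v) * psi p (y+v))]
  rw [stepWt_A1, stepWt_A2, stepWt_A3, stepWt_B1, stepWt_B2, stepWt_B3]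
  obtain ⟨y1, y2, y3⟩ := y
  simp only [Prod.mk_add_mk, Prod.fst, Prod.snd] at *
  rw [ite_flip (t := PowerSeries.C α * psi p (y1+1, y2+0, y3+-1))
      (Q := y3 = 0) (by simp only [nonneg3]; first | omega | (dsimp only; omega)),
    ite_flip (t := PowerSeries.C α * psi p (y1+-1, y2+1, y3+0))
      (Q := y1 = 0) (by simp only [nonneg3]; first | omega | (dsimp only; omega)),
    ite_flip (t := PowerSeries.C α * psi p (y1+0, y2+-1, y3+1))
      (Q := y2 = 0) (by simp only [nonneg3]; first | omega | (dsimp only; omega)),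
    ite_flip (t := PowerSeries.C β * psi p (y1+1, y2+-1, y3+0))
      (Q := y2 = 0) (by simp only [nonneg3]; first | omega | (dsimp only; omega)),
    ite_flip (t := PowerSeries.C β * psi p (y1+-1, y2+0, y3+1))
      (Q := y1 = 0) (by simp only [nonneg3]; first | omega | (dsimp only; omega)),
    ite_flip (t := PowerSeries.C β * psi p (y1+0, y2+1, y3+-1))
      (Q := y3 = 0) (by simp only [nonneg3]; first | omega | (dsimp only; omega))]
  rw [ite_then_congr (fun hq : y3 = 0 => by
      rw [show ((y1+1 : ℤ), y2+0, y3+-1) = (y1+1, y2+0, -1) by rw [hq]; norm_num,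
        bdry3 p L (by omega) (by omega) (by omega)]),
    ite_then_congr (t := PowerSeries.C α * psi p (y1+-1, y2+1, y3+0)) (fun hq : y1 = 0 => by
      rw [show ((y1+-1 : ℤ), y2+1, y3+0) = (-1, y2+1, y3+0) by rw [hq]; norm_num,
        bdry1 p L (by omega) (by omega) (by omega)]),
    ite_then_congr (t := PowerSeries.C α * psi p (y1+0, y2+-1, y3+1)) (fun hq : y2 = 0 => by
      rw [show ((y1+0 : ℤ), y2+-1, y3+1) = (y1+0, -1, y3+1) by rw [hq]; norm_num,
        bdry2 p L (by omega) (by omega) (by omega)]),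
    ite_then_congr (t := PowerSeries.C β * psi p (y1+1, y2+-1, y3+0)) (fun hq : y2 = 0 => by
      rw [show ((y1+1 : ℤ), y2+-1, y3+0) = (y1+1, -1, y3+0) by rw [hq]; norm_num,
        bdry2 p L (by omega) (by omega) (by omega)]),
    ite_then_congr (t := PowerSeries.C β * psi p (y1+-1, y2+0, y3+1)) (fun hq : y1 = 0 => by
      rw [show ((y1+-1 : ℤ), y2+0, y3+1) = (-1, y2+0, y3+1) by rw [hq]; norm_num,
        bdry1 p L (by omega) (by omega) (by omega)]),
    ite_then_congr (t := PowerSeries.C β * psi p (y1+0, y2+1, y3+-1)) (fun hq : y3 = 0 => by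
      rw [show ((y1+0 : ℤ), y2+1, y3+-1) = (y1+0, y2+1, -1) by rw [hq]; norm_num,
        bdry3 p L (by omega) (by omega) (by omega)])]
  split_ifs <;> ring

lemma master (α β : ℚ) (p : PowerSeries ℚ)
    (hp' : p = (PowerSeries.C α + PowerSeries.C β) * PowerSeries.X * (1 + p + p ^ 2))
    (x₀ : ℤ×ℤ×ℤ) (L : ℕ) (h0 : nonneg3 x₀) (hsum : x₀.1 + x₀.2.1 + x₀.2.2 = (L:ℤ)) :
    psi p x₀ = PowerSeries.X * (((PowerSeries.C α + PowerSeries.C β) * (1 - p^(L+3)))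
      * ((∑ y ∈ (Tri L).filter (fun y => y.1 = 0), FF α β x₀ y)
        + (∑ y ∈ (Tri L).filter (fun y => y.2.1 = 0), FF α β x₀ y)
        + (∑ y ∈ (Tri L).filter (fun y => y.2.2 = 0), FF α β x₀ y))) := by
  have hx₀T : x₀ ∈ Tri L := mem_Tri.2 ⟨h0, hsum⟩
  -- the master sum
  have key : ∑ y ∈ Tri L, psi p y * FF α β x₀ y
      = psi p x₀ + ∑ y ∈ Tri L, psi p y
          * (PowerSeries.X * ∑ v ∈ OmegaFull, PowerSeries.C (stepWt α β v) * FF α β x₀ (y - v)) := by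
    rw [Finset.sum_congr rfl (fun y hy => by
      rw [FF_rec α β x₀ y h0 (mem_Tri.1 hy).1, mul_add])]
    rw [Finset.sum_add_distrib]
    congr 1
    have : ∀ y ∈ Tri L, psi p y * (if x₀ = y then (1:PowerSeries ℚ) else 0)
        = if x₀ = y then psi p y else 0 := by
      intro y _; split_ifs with h
      · rw [mul_one]
      · rw [mul_zero]
    rw [Finset.sum_congr rfl this, Finset.sum_ite_eq (Tri L) x₀ (fun y => psi p y), if_pos hx₀T]
  -- reindexing the double sum
  have reindex : ∑ y ∈ Tri L, ∑ v ∈ OmegaFull,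
        psi p y * (PowerSeries.C (stepWt α β v) * FF α β x₀ (y - v))
      = ∑ y ∈ Tri L, ∑ v ∈ OmegaFull,
        (if nonneg3 (y + v) then PowerSeries.C (stepWt α β v) * psi p (y + v) else 0)
          * FF α β x₀ y := by
    rw [← Finset.sum_product', ← Finset.sum_product']
    rw [← Finset.sum_filter_of_ne (p := fun q : (ℤ×ℤ×ℤ) × (ℤ×ℤ×ℤ) => nonneg3 (q.1 - q.2))
      (fun q hq hne => by
        by_contra hnn
        exact hne (by rw [FF_eq_zero α β x₀ _ (fun hc => hnn hc.1), mul_zero, mul_zero]))]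
    have hR : ∑ q ∈ (Tri L ×ˢ OmegaFull).filter
          (fun q : (ℤ×ℤ×ℤ) × (ℤ×ℤ×ℤ) => nonneg3 (q.1 + q.2)),
          PowerSeries.C (stepWt α β q.2) * psi p (q.1 + q.2) * FF α β x₀ q.1
        = ∑ q ∈ Tri L ×ˢ OmegaFull,
          (if nonneg3 (q.1 + q.2) then PowerSeries.C (stepWt α β q.2) * psi p (q.1 + q.2) else 0)
            * FF α β x₀ q.1 := by
      rw [Finset.sum_filter]
      refine Finset.sum_congr rfl fun q _ => ?_
      split_ifs <;> simp
    rw [← hR]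
    refine Finset.sum_nbij' (fun q => (q.1 - q.2, q.2)) (fun q => (q.1 + q.2, q.2)) ?_ ?_ ?_ ?_ ?_
    · rintro ⟨y, v⟩ hq
      simp only [Finset.mem_filter, Finset.mem_product] at hq ⊢
      obtain ⟨⟨hyT, hv⟩, hnn⟩ := hq
      obtain ⟨hy1, hy2⟩ := mem_Tri.1 hyT
      refine ⟨⟨mem_Tri.2 ⟨hnn, ?_⟩, hv⟩, ?_⟩
      · have := step_sum_zero hv
        simp only [Prod.fst_sub, Prod.snd_sub]
        omega
      · simp only [sub_add_cancel]
        exact hy1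
    · rintro ⟨y, v⟩ hq
      simp only [Finset.mem_filter, Finset.mem_product] at hq ⊢
      obtain ⟨⟨hyT, hv⟩, hnn⟩ := hq
      obtain ⟨hy1, hy2⟩ := mem_Tri.1 hyT
      refine ⟨⟨mem_Tri.2 ⟨hnn, ?_⟩, hv⟩, ?_⟩
      · have := step_sum_zero hv
        simp only [Prod.fst_add, Prod.snd_add]
        omega
      · simp only [add_sub_cancel_right]
        exact hy1
    · rintro ⟨y, v⟩ _; simp [sub_add_cancel]
    · rintro ⟨y, v⟩ _; simp [add_sub_cancel_right]
    · rintro ⟨y, v⟩ _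
      simp only [sub_add_cancel]
      ring
  -- pull X out of the double sum
  have pull : ∑ y ∈ Tri L, psi p y
        * (PowerSeries.X * ∑ v ∈ OmegaFull, PowerSeries.C (stepWt α β v) * FF α β x₀ (y - v))
      = PowerSeries.X * ∑ y ∈ Tri L, ∑ v ∈ OmegaFull,
          psi p y * (PowerSeries.C (stepWt α β v) * FF α β x₀ (y - v)) := by
    rw [Finset.mul_sum]
    refine Finset.sum_congr rfl fun y _ => ?_
    rw [Finset.mul_sum, Finset.mul_sum, Finset.mul_sum]
    refine Finset.sum_congr rfl fun v _ => ?_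
    ring
  -- split the indicator
  have split : ∑ y ∈ Tri L, ∑ v ∈ OmegaFull,
        (if nonneg3 (y + v) then PowerSeries.C (stepWt α β v) * psi p (y + v) else 0)
          * FF α β x₀ y
      = (∑ y ∈ Tri L, (∑ v ∈ OmegaFull, PowerSeries.C (stepWt α β v) * psi p (y + v))
            * FF α β x₀ y)
        - ∑ y ∈ Tri L, (∑ v ∈ OmegaFull,
            (if nonneg3 (y + v) then 0 else PowerSeries.C (stepWt α β v) * psi p (y + v)))
              * FF α β x₀ y := by
    rw [← Finset.sum_sub_distrib]
    refine Finset.sum_congr rfl fun y _ => ?_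
    rw [Finset.sum_mul, Finset.sum_mul, ← Finset.sum_sub_distrib]
    refine Finset.sum_congr rfl fun v _ => ?_
    split_ifs <;> ring
  -- eigen part
  have eigpart : PowerSeries.X * ∑ y ∈ Tri L,
        (∑ v ∈ OmegaFull, PowerSeries.C (stepWt α β v) * psi p (y + v)) * FF α β x₀ y
      = ∑ y ∈ Tri L, psi p y * FF α β x₀ y := by
    rw [Finset.mul_sum]
    refine Finset.sum_congr rfl fun y hy => ?_
    rw [← mul_assoc, eigen hp' y (mem_Tri.1 hy).1]
  -- escape part
  have escpart : ∑ y ∈ Tri L, (∑ v ∈ OmegaFull,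
        (if nonneg3 (y + v) then 0 else PowerSeries.C (stepWt α β v) * psi p (y + v)))
          * FF α β x₀ y
      = ((PowerSeries.C α + PowerSeries.C β) * (1 - p^(L+3)))
        * ((∑ y ∈ (Tri L).filter (fun y => y.1 = 0), FF α β x₀ y)
          + (∑ y ∈ (Tri L).filter (fun y => y.2.1 = 0), FF α β x₀ y)
          + (∑ y ∈ (Tri L).filter (fun y => y.2.2 = 0), FF α β x₀ y)) := by
    have hy' : ∀ y ∈ Tri L, (∑ v ∈ OmegaFull,
        (if nonneg3 (y + v) then 0 else PowerSeries.C (stepWt α β v) * psi p (y + v)))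
          * FF α β x₀ y
        = (if y.1 = 0 then ((PowerSeries.C α + PowerSeries.C β) * (1 - p^(L+3)))
              * FF α β x₀ y else 0)
          + (if y.2.1 = 0 then ((PowerSeries.C α + PowerSeries.C β) * (1 - p^(L+3)))
              * FF α β x₀ y else 0)
          + (if y.2.2 = 0 then ((PowerSeries.C α + PowerSeries.C β) * (1 - p^(L+3)))
              * FF α β x₀ y else 0) := by
      intro y hy
      rw [escape α β p L y hy]
      split_ifs <;> ring
    rw [Finset.sum_congr rfl hy']
    rw [Finset.sum_add_distrib, Finset.sum_add_distrib]
    rw [← Finset.sum_filter, ← Finset.sum_filter, ← Finset.sum_filter]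
    rw [← Finset.mul_sum, ← Finset.mul_sum, ← Finset.mul_sum]
    ring
  have final := key
  rw [pull, reindex, split, mul_sub, eigpart, escpart] at final
  linear_combination -final

/-- The combined weighted generating function of triangle-model walks
starting at `(u,v,w)` and ending on one of the three sides of the triangle. -/
theorem triangle_boundary_gf (u v w : ℕ) (α β : ℚ) (p : PowerSeries ℚ)
    (hp0 : PowerSeries.constantCoeff p = 0)
    (hp : p = PowerSeries.C (α + β) * PowerSeries.X * (1 + p + p ^ 2)) :
    PowerSeries.C (α + β) * PowerSeries.X *
        ((PowerSeries.mk fun n =>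
            ∑ s ∈ (triWalks ((u : ℤ), (v : ℤ), (w : ℤ)) n).filter
                (fun s => (triPos ((u : ℤ), (v : ℤ), (w : ℤ)) s n).1 = 0),
              α ^ countA s * β ^ countB s) +
          (PowerSeries.mk fun n =>
            ∑ s ∈ (triWalks ((u : ℤ), (v : ℤ), (w : ℤ)) n).filter
                (fun s => (triPos ((u : ℤ), (v : ℤ), (w : ℤ)) s n).2.1 = 0),
              α ^ countA s * β ^ countB s) +
          (PowerSeries.mk fun n =>
            ∑ s ∈ (triWalks ((u : ℤ), (v : ℤ), (w : ℤ)) n).filter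
                (fun s => (triPos ((u : ℤ), (v : ℤ), (w : ℤ)) s n).2.2 = 0),
              α ^ countA s * β ^ countB s)) *
        (1 - p ^ (u + v + w + 3))
      = p ^ (u + 1) + p ^ (v + 1) + p ^ (w + 1)
          - p ^ (v + w + 2) - p ^ (u + w + 2) - p ^ (u + v + 2) := by

  set x₀ : ℤ × ℤ × ℤ := ((u : ℤ), (v : ℤ), (w : ℤ)) with hx₀
  have h0 : nonneg3 x₀ := ⟨Int.ofNat_nonneg u, Int.ofNat_nonneg v, Int.ofNat_nonneg w⟩
  have hsum : x₀.1 + x₀.2.1 + x₀.2.2 = ((u + v + w : ℕ) : ℤ) := by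
    rw [hx₀]; push_cast; ring
  have hp' : p = (PowerSeries.C α + PowerSeries.C β) * PowerSeries.X * (1 + p + p ^ 2) := by
    rw [← map_add]; exact hp
  have hM := master α β p hp' x₀ (u + v + w) h0 hsum
  have hA : (PowerSeries.mk fun n =>
        ∑ s ∈ (triWalks x₀ n).filter (fun s => (triPos x₀ s n).1 = 0),
          α ^ countA s * β ^ countB s)
      = ∑ y ∈ (Tri (u+v+w)).filter (fun y => y.1 = 0), FF α β x₀ y :=
    boundary_sum α β x₀ (u+v+w) hsum (fun z => z.1)
  have hB : (PowerSeries.mk fun n =>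
        ∑ s ∈ (triWalks x₀ n).filter (fun s => (triPos x₀ s n).2.1 = 0),
          α ^ countA s * β ^ countB s)
      = ∑ y ∈ (Tri (u+v+w)).filter (fun y => y.2.1 = 0), FF α β x₀ y :=
    boundary_sum α β x₀ (u+v+w) hsum (fun z => z.2.1)
  have hC : (PowerSeries.mk fun n =>
        ∑ s ∈ (triWalks x₀ n).filter (fun s => (triPos x₀ s n).2.2 = 0),
          α ^ countA s * β ^ countB s)
      = ∑ y ∈ (Tri (u+v+w)).filter (fun y => y.2.2 = 0), FF α β x₀ y :=
    boundary_sum α β x₀ (u+v+w) hsum (fun z => z.2.2)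
  have hpsi : psi p x₀ = p ^ (u + 1) + p ^ (v + 1) + p ^ (w + 1)
      - p ^ (v + w + 2) - p ^ (u + w + 2) - p ^ (u + v + 2) :=
    psi_eval p x₀ (u+1) (v+1) (w+1) (v+w+2) (u+w+2) (u+v+2)
      (by rw [hx₀]; push_cast; ring) (by rw [hx₀]; push_cast; ring)
      (by rw [hx₀]; push_cast; ring) (by rw [hx₀]; push_cast; ring)
      (by rw [hx₀]; push_cast; ring) (by rw [hx₀]; push_cast; ring)
  rw [hA, hB, hC, map_add]
  linear_combination hpsi - hM
end

section
/- Fix weights α, β ∈ ℚ, set s = (α+β)·t ∈ ℚ[[t]], and for each L ∈ ℕ define F_L = (1−p^3)·(1−p^(L+1))·((1−p)·(1−p^(L+3)))⁻¹ ∈ ℚ[[t]] (the factors 1−p and 1−p^(L+3) have constant term 1 and hence are invertible in ℚ[[t]]). Then for every L ∈ ℕ the continued-fraction recursion F_(L+2)·(1 − s − s²·F_L) = 1 holds in ℚ[[t]], and moreover F_0 = 1 and F_1·(1−s) = 1. -/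
/-- The closed-form corner generating functions
`F_L = (1-p³)(1-p^(L+1)) / ((1-p)(1-p^(L+3)))` satisfy the continued-fraction recursion
`F_(L+2) (1 - s - s² F_L) = 1` with `F_0 = 1` and `F_1 (1-s) = 1`, where
`s = (α+β) t`. -/
theorem corner_gf_continued_fraction (α β : ℚ) (p : PowerSeries ℚ)
    (hp0 : PowerSeries.constantCoeff p = 0)
    (hp : p = PowerSeries.C (α + β) * PowerSeries.X * (1 + p + p ^ 2)) :
    let s : PowerSeries ℚ := PowerSeries.C (α + β) * PowerSeries.X
    let F : ℕ → PowerSeries ℚ := fun L =>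
      (1 - p ^ 3) * (1 - p ^ (L + 1)) * ((1 - p) * (1 - p ^ (L + 3)))⁻¹
    (∀ L : ℕ, F (L + 2) * (1 - s - s ^ 2 * F L) = 1) ∧ F 0 = 1 ∧ F 1 * (1 - s) = 1 := by
  intro s F
  have hs : s * (1 + p + p ^ 2) = p := hp.symm
  -- constant coefficient facts
  have hcc : ∀ (n : ℕ), PowerSeries.constantCoeff
      ((1 - p) * (1 - p ^ (n + 3))) ≠ 0 := by
    intro n
    simp [hp0]
  have FU : ∀ L : ℕ, F L * ((1 - p) * (1 - p ^ (L + 3)))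
      = (1 - p ^ 3) * (1 - p ^ (L + 1)) := by
    intro L
    have h := PowerSeries.mul_inv_cancel ((1 - p) * (1 - p ^ (L + 3))) (hcc L)
    calc F L * ((1 - p) * (1 - p ^ (L + 3)))
        = (1 - p ^ 3) * (1 - p ^ (L + 1)) *
            (((1 - p) * (1 - p ^ (L + 3))) * ((1 - p) * (1 - p ^ (L + 3)))⁻¹) := by
          show (1 - p ^ 3) * (1 - p ^ (L + 1)) * ((1 - p) * (1 - p ^ (L + 3)))⁻¹ *
              ((1 - p) * (1 - p ^ (L + 3))) = _
          ring
      _ = (1 - p ^ 3) * (1 - p ^ (L + 1)) := by rw [h, mul_one]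
  refine ⟨?_, ?_, ?_⟩
  · intro L
    have e1 := FU (L + 2)
    rw [show L + 2 + 3 = L + 5 by omega, show L + 2 + 1 = L + 3 by omega] at e1
    have e2 := FU L
    set W : PowerSeries ℚ :=
      ((1 - p) * (1 - p ^ (L + 5))) * ((1 - p) * (1 - p ^ (L + 3))) * (1 + p + p ^ 2) ^ 2
      with hW
    have hWne : W ≠ 0 := by
      intro h
      have : PowerSeries.constantCoeff W = 0 := by rw [h]; simp
      rw [hW] at this
      simp [hp0] at this
    apply mul_right_cancel₀ hWne
    calc F (L + 2) * (1 - s - s ^ 2 * F L) * W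
        = (F (L + 2) * ((1 - p) * (1 - p ^ (L + 5)))) *
            (((1 + p + p ^ 2) - s * (1 + p + p ^ 2)) * (1 + p + p ^ 2) *
                ((1 - p) * (1 - p ^ (L + 3)))
              - (s * (1 + p + p ^ 2)) ^ 2 * (F L * ((1 - p) * (1 - p ^ (L + 3))))) := by
          rw [hW]; ring
      _ = ((1 - p ^ 3) * (1 - p ^ (L + 3))) *
            (((1 + p + p ^ 2) - p) * (1 + p + p ^ 2) * ((1 - p) * (1 - p ^ (L + 3)))
              - p ^ 2 * ((1 - p ^ 3) * (1 - p ^ (L + 1)))) := by rw [e1, e2, hs]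
      _ = 1 * W := by
          rw [hW, show L + 5 = L + 1 + 4 by omega, show L + 3 = L + 1 + 2 by omega]
          ring
  · have h := PowerSeries.mul_inv_cancel ((1 - p) * (1 - p ^ (0 + 3))) (hcc 0)
    show (1 - p ^ 3) * (1 - p ^ (0 + 1)) * ((1 - p) * (1 - p ^ (0 + 3)))⁻¹ = 1
    rw [show (1 - p ^ 3) * (1 - p ^ (0 + 1)) = (1 - p) * (1 - p ^ (0 + 3)) from by ring]
    exact h
  · have e1 := FU 1
    set W : PowerSeries ℚ := ((1 - p) * (1 - p ^ (1 + 3))) * (1 + p + p ^ 2) with hW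
    have hWne : W ≠ 0 := by
      intro h
      have : PowerSeries.constantCoeff W = 0 := by rw [h]; simp
      rw [hW] at this
      simp [hp0] at this
    apply mul_right_cancel₀ hWne
    calc F 1 * (1 - s) * W
        = (F 1 * ((1 - p) * (1 - p ^ (1 + 3)))) *
            ((1 + p + p ^ 2) - s * (1 + p + p ^ 2)) := by rw [hW]; ring
      _ = ((1 - p ^ 3) * (1 - p ^ (1 + 1))) * ((1 + p + p ^ 2) - p) := by rw [e1, hs]
      _ = 1 * W := by rw [hW]; norm_num; ring
end
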